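/- Let ξ be a nonnegative integer-valued random variable with E[e^{α·ξ}] < ∞ for some α > 0, mean a and variance σ² > 0, and let (A_N)_{N≥1} be positive numbers with A_N ≥ c·N^ε for some constants c, ε > 0. Let f̃_N(t) = E[ exp( i·t·(ξ^{(A_N)} − a_N) ) ] be the characteristic function of the centered truncated variable, where a_N = E[ξ^{(A_N)}]. Then there exist ε' > 0 and N₀ such that for all real t with |t| < ε' and all N > N₀: | f̃_N(t) | ≤ exp( −σ²·t²/4 ). -/

import Mathlib

open Filter Topology
open scoped Classical

/-- The truncated distribution: `P(ξ^{(A)} = j) = P(ξ = j | ξ ≤ A)`. -/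
noncomputable def pTrunc (p : ℕ → ℝ) (A : ℝ) (j : ℕ) : ℝ :=
  if (j : ℝ) ≤ A then p j / ∑' l : ℕ, (if (l : ℝ) ≤ A then p l else 0) else 0

/-- Mean of the truncated variable `ξ^{(A)}`. -/
noncomputable def truncMean (p : ℕ → ℝ) (A : ℝ) : ℝ :=
  ∑' j : ℕ, (j : ℝ) * pTrunc p A j

/-- The characteristic function `f̃_N(t) = E[exp(i t (ξ^{(A_N)} − a_N))]` of the
centered truncated variable. -/
noncomputable def charTrunc (p : ℕ → ℝ) (A : ℝ) (t : ℝ) : ℂ :=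
  ∑' j : ℕ, (pTrunc p A j : ℂ) *
    Complex.exp (Complex.I * (t : ℂ) * (((j : ℝ) - truncMean p A : ℝ) : ℂ))

lemma trunc_tsum_eq (g : ℕ → ℝ) (A : ℝ) (hA : 0 ≤ A) :
    ∑' j : ℕ, (if (j : ℝ) ≤ A then g j else 0) = ∑ j ∈ Finset.range (⌊A⌋₊ + 1), g j := by
  rw [tsum_eq_sum (s := Finset.range (⌊A⌋₊ + 1)) (by
    intro j hj
    rw [Finset.mem_range, Nat.lt_succ_iff] at hj
    exact if_neg (fun h => hj ((Nat.le_floor_iff hA).mpr h)))]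
  exact Finset.sum_congr rfl fun j hj => if_pos
    ((Nat.le_floor_iff hA).mp (Nat.lt_succ_iff.mp (Finset.mem_range.mp hj)))

lemma cos_le_cube (y : ℝ) : Real.cos y ≤ 1 - y^2/2 + |y|^3 := by
  rcases le_or_gt |y| 1 with h | h
  · have h1 := abs_sub_le_iff.1 (Real.cos_bound h)
    have h4 : |y|^4 ≤ |y|^3 := pow_le_pow_of_le_one (abs_nonneg y) h (by norm_num)
    nlinarith [sq_abs y]
  · have h2 : y^2 ≤ |y|^3 := by
      have : |y|^2 ≤ |y|^3 := pow_le_pow_right₀ h.le (by norm_num)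
      nlinarith [sq_abs y]
    nlinarith [Real.cos_le_one y]

lemma cube_le (u v : ℝ) (hu : 0 ≤ u) (hv : 0 ≤ v) : (u+v)^3 ≤ 4*(u^3+v^3) := by
  nlinarith [sq_nonneg (u-v), sq_nonneg (u+v), mul_nonneg hu hv]

lemma summable_pow_mul (p : ℕ → ℝ) (hp : ∀ j, 0 ≤ p j) (α : ℝ) (hα : 0 < α)
    (hs : Summable fun j : ℕ => p j * Real.exp (α * j)) (k : ℕ) :
    Summable fun j : ℕ => (j:ℝ)^k * p j := by
  refine Summable.of_nonneg_of_le
    (fun j => mul_nonneg (pow_nonneg (Nat.cast_nonneg j) k) (hp j))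
    (fun j => ?_) (hs.mul_left ((Nat.factorial k : ℝ) / α^k))
  have h1 : (α*j)^k / (Nat.factorial k : ℝ) ≤ Real.exp (α*j) :=
    Real.pow_div_factorial_le_exp _ (by positivity) k
  have h2 : (j:ℝ)^k ≤ ((Nat.factorial k : ℝ)/α^k) * Real.exp (α * j) := by
    rw [div_le_iff₀ (by positivity)] at h1
    rw [div_mul_eq_mul_div, le_div_iff₀ (by positivity)]
    calc (j:ℝ)^k * α^k = (α*j)^k := by rw [mul_pow]; ring
      _ ≤ Real.exp (α*j) * (Nat.factorial k) := h1
      _ = (Nat.factorial k : ℝ) * Real.exp (α*j) := mul_comm _ _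
  calc (j:ℝ)^k * p j ≤ (((Nat.factorial k : ℝ)/α^k) * Real.exp (α*j)) * p j :=
        mul_le_mul_of_nonneg_right h2 (hp j)
    _ = ((Nat.factorial k : ℝ)/α^k) * (p j * Real.exp (α*j)) := by ring

lemma sum_poly (K : Finset ℕ) (q : ℕ → ℝ) (c0 c1 c2 c3 : ℝ) :
    ∑ k ∈ K, q k * (c0 + c1*k + c2*(k:ℝ)^2 + c3*(k:ℝ)^3)
    = c0 * (∑ k ∈ K, q k) + c1 * (∑ k ∈ K, (k:ℝ)*q k)
      + c2 * (∑ k ∈ K, (k:ℝ)^2*q k) + c3 * (∑ k ∈ K, (k:ℝ)^3*q k) := by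
  rw [Finset.mul_sum, Finset.mul_sum, Finset.mul_sum, Finset.mul_sum,
    ← Finset.sum_add_distrib, ← Finset.sum_add_distrib, ← Finset.sum_add_distrib]
  exact Finset.sum_congr rfl fun k _ => by ring

lemma doublesum_bound (K : Finset ℕ) (q : ℕ → ℝ) (hq : ∀ j, 0 ≤ q j)
    (hQ : ∑ j ∈ K, q j = 1) (t : ℝ) :
    ∑ j ∈ K, ∑ k ∈ K, (q j * q k) * Real.cos (t * ((j:ℝ) - (k:ℝ)))
      ≤ 1 - t^2 * ((∑ j ∈ K, (j:ℝ)^2 * q j) - (∑ j ∈ K, (j:ℝ)*q j)^2)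
        + 8 * |t|^3 * (∑ j ∈ K, (j:ℝ)^3 * q j) := by
  have key : ∑ j ∈ K, ∑ k ∈ K,
      (q j * q k) * (1 - t^2*((j:ℝ)-(k:ℝ))^2/2 + 4*|t|^3*((j:ℝ)^3+(k:ℝ)^3))
      = 1 - t^2 * ((∑ j ∈ K, (j:ℝ)^2 * q j) - (∑ j ∈ K, (j:ℝ)*q j)^2)
        + 8 * |t|^3 * (∑ j ∈ K, (j:ℝ)^3 * q j) := by
    have inner : ∀ j : ℕ, ∑ k ∈ K,
        (q j * q k) * (1 - t^2*((j:ℝ)-(k:ℝ))^2/2 + 4*|t|^3*((j:ℝ)^3+(k:ℝ)^3))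
        = q j * ((1 - t^2/2*(∑ k ∈ K, (k:ℝ)^2*q k) + 4*|t|^3*(∑ k ∈ K, (k:ℝ)^3*q k))
            + (t^2*(∑ k ∈ K, (k:ℝ)*q k))*(j:ℝ) + (-(t^2)/2)*(j:ℝ)^2 + (4*|t|^3)*(j:ℝ)^3) := by
      intro j
      have h : ∀ k ∈ K, (q j * q k) * (1 - t^2*((j:ℝ)-(k:ℝ))^2/2 + 4*|t|^3*((j:ℝ)^3+(k:ℝ)^3))
          = q j * (q k * ((1 - t^2/2*(j:ℝ)^2 + 4*|t|^3*(j:ℝ)^3)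
            + (t^2*(j:ℝ))*(k:ℝ) + (-(t^2)/2)*(k:ℝ)^2 + (4*|t|^3)*(k:ℝ)^3)) := fun k _ => by ring
      rw [Finset.sum_congr rfl h, ← Finset.mul_sum, sum_poly, hQ]
      ring
    rw [Finset.sum_congr rfl (fun j _ => inner j), sum_poly, hQ]
    ring
  rw [← key]
  refine Finset.sum_le_sum fun j _ => Finset.sum_le_sum fun k _ => ?_
  have hj : (0:ℝ) ≤ j := Nat.cast_nonneg j
  have hk : (0:ℝ) ≤ k := Nat.cast_nonneg k
  have habs : |(j:ℝ)-(k:ℝ)| ≤ (j:ℝ)+(k:ℝ) := by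
    rw [abs_le]; constructor <;> linarith
  have hcube : |(j:ℝ)-(k:ℝ)|^3 ≤ 4*((j:ℝ)^3+(k:ℝ)^3) :=
    (pow_le_pow_left₀ (abs_nonneg _) habs 3).trans (cube_le _ _ hj hk)
  have b2 : |t*((j:ℝ)-(k:ℝ))|^3 ≤ |t|^3 * (4*((j:ℝ)^3+(k:ℝ)^3)) := by
    rw [abs_mul, mul_pow]
    exact mul_le_mul_of_nonneg_left hcube (by positivity)
  have b1 : Real.cos (t*((j:ℝ)-(k:ℝ))) ≤ 1 - t^2*((j:ℝ)-(k:ℝ))^2/2 + 4*|t|^3*((j:ℝ)^3+(k:ℝ)^3) := by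
    calc Real.cos (t*((j:ℝ)-(k:ℝ))) ≤ 1 - (t*((j:ℝ)-(k:ℝ)))^2/2 + |t*((j:ℝ)-(k:ℝ))|^3 :=
          cos_le_cube _
      _ ≤ _ := by rw [mul_pow]; linarith
  exact mul_le_mul_of_nonneg_left b1 (mul_nonneg (hq j) (hq k))

lemma charsq (p : ℕ → ℝ) (A t : ℝ) (hA : 0 ≤ A) :
    ‖charTrunc p A t‖ ^ 2 =
      ∑ j ∈ Finset.range (⌊A⌋₊+1), ∑ k ∈ Finset.range (⌊A⌋₊+1),
        (pTrunc p A j * pTrunc p A k) * Real.cos (t * ((j:ℝ) - (k:ℝ))) := by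
  set K := Finset.range (⌊A⌋₊+1) with hK
  set b := truncMean p A with hb
  have hq0 : ∀ j ∉ K, pTrunc p A j = 0 := by
    intro j hj
    rw [Finset.mem_range, Nat.lt_succ_iff] at hj
    exact if_neg (fun h => hj ((Nat.le_floor_iff hA).mpr h))
  have h1 : charTrunc p A t =
      ∑ j ∈ K, (pTrunc p A j : ℂ) * Complex.exp (Complex.I * t * (((j:ℝ) - b : ℝ) : ℂ)) := by
    apply tsum_eq_sum
    intro j hj
    rw [hq0 j hj]
    simp
  have h2 : ‖charTrunc p A t‖^2
      = ((charTrunc p A t) * (starRingEnd ℂ) (charTrunc p A t)).re := by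
    rw [Complex.mul_conj, Complex.sq_norm]
    simp
  rw [h2, h1, map_sum, Finset.sum_mul_sum, Complex.re_sum]
  refine Finset.sum_congr rfl fun j hj => ?_
  rw [Complex.re_sum]
  refine Finset.sum_congr rfl fun k hk => ?_
  rw [map_mul, ← Complex.exp_conj, Complex.conj_ofReal]
  have hc : (starRingEnd ℂ) (Complex.I * t * (((k:ℝ) - b : ℝ) : ℂ))
      = -(Complex.I * t * (((k:ℝ) - b : ℝ) : ℂ)) := by
    simp [map_mul, Complex.conj_I, Complex.conj_ofReal]
  rw [hc]
  have : ((pTrunc p A j : ℂ) * Complex.exp (Complex.I * t * (((j:ℝ) - b : ℝ) : ℂ))) *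
      ((pTrunc p A k : ℂ) * Complex.exp (-(Complex.I * t * (((k:ℝ) - b : ℝ) : ℂ))))
      = ((pTrunc p A j * pTrunc p A k : ℝ) : ℂ) *
        Complex.exp (((t * ((j:ℝ) - (k:ℝ)) : ℝ) : ℂ) * Complex.I) := by
    rw [mul_mul_mul_comm, ← Complex.exp_add]
    congr 1
    · push_cast; ring
    · congr 1; push_cast; ring
  rw [this, Complex.mul_re, Complex.ofReal_re, Complex.ofReal_im,
    Complex.exp_ofReal_mul_I_re]
  ring

lemma sum_pow_pTrunc (p : ℕ → ℝ) (A : ℝ) (hA : 0 ≤ A) (i : ℕ) :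
    ∑ j ∈ Finset.range (⌊A⌋₊+1), (j:ℝ)^i * pTrunc p A j
    = (∑ j ∈ Finset.range (⌊A⌋₊+1), (j:ℝ)^i * p j) / (∑ j ∈ Finset.range (⌊A⌋₊+1), p j) := by
  rw [Finset.sum_div]
  refine Finset.sum_congr rfl fun j hj => ?_
  have hcond : (j:ℝ) ≤ A :=
    (Nat.le_floor_iff hA).mp (Nat.lt_succ_iff.mp (Finset.mem_range.mp hj))
  unfold pTrunc
  rw [trunc_tsum_eq p A hA, if_pos hcond, mul_div_assoc]

set_option maxHeartbeats 2000000 in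
/-- There exist `ε' > 0` and `N₀` such that for `|t| < ε'` and `N > N₀`,
`|f̃_N(t)| ≤ exp(−σ² t² / 4)`. -/
theorem charTrunc_bound
    (p : ℕ → ℝ)
    (hp_nonneg : ∀ j, 0 ≤ p j)
    (hp_sum : ∑' j : ℕ, p j = 1)
    (hp_tail : ∃ α > 0, Summable fun j : ℕ => p j * Real.exp (α * j))
    (a : ℝ) (ha : a = ∑' j : ℕ, (j : ℝ) * p j)
    (σ : ℝ) (hσ : 0 < σ)
    (hvar : σ ^ 2 = ∑' j : ℕ, ((j : ℝ) - a) ^ 2 * p j)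
    (A : ℕ → ℝ) (hApos : ∀ N, 0 < A N)
    (hA : ∃ c > 0, ∃ ε > 0, ∀ N : ℕ, 1 ≤ N → c * (N : ℝ) ^ ε ≤ A N) :
    ∃ ε' > 0, ∃ N₀ : ℕ, ∀ t : ℝ, |t| < ε' → ∀ N : ℕ, N₀ < N →
      ‖charTrunc p (A N) t‖ ≤ Real.exp (-(σ ^ 2) * t ^ 2 / 4) := by
  obtain ⟨α, hα, htail⟩ := hp_tail
  obtain ⟨c, hc, ε, hε, hcA⟩ := hA
  have hsum0 : Summable p := by
    simpa using summable_pow_mul p hp_nonneg α hα htail 0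
  have hsum1 : Summable fun j : ℕ => (j:ℝ) * p j := by
    simpa using summable_pow_mul p hp_nonneg α hα htail 1
  have hsum2 : Summable fun j : ℕ => (j:ℝ)^2 * p j := summable_pow_mul p hp_nonneg α hα htail 2
  have hsum3 : Summable fun j : ℕ => (j:ℝ)^3 * p j := summable_pow_mul p hp_nonneg α hα htail 3
  set m2 := ∑' j : ℕ, (j:ℝ)^2 * p j with hm2
  set m3 := ∑' j : ℕ, (j:ℝ)^3 * p j with hm3
  clear_value m3
  have hm3nn : 0 ≤ m3 := by
    rw [hm3]
    exact tsum_nonneg fun j => mul_nonneg (by positivity) (hp_nonneg j)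
  -- variance identity
  have hvar2 : m2 - a^2 = σ^2 := by
    have h1 : ∀ j:ℕ, ((j:ℝ)-a)^2*p j = ((j:ℝ)^2*p j - 2*a*((j:ℝ)*p j)) + a^2*p j :=
      fun j => by ring
    rw [hvar, tsum_congr h1,
      Summable.tsum_add (hsum2.sub (hsum1.mul_left (2*a))) (hsum0.mul_left (a^2)),
      Summable.tsum_sub hsum2 (hsum1.mul_left (2*a)), tsum_mul_left, tsum_mul_left, ← ha, hp_sum]
    ring
  -- A N → ∞
  have hAtop : Tendsto (fun N => A N) atTop atTop := by
    have h1 : Tendsto (fun N : ℕ => c * (N:ℝ)^ε) atTop atTop :=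
      (((tendsto_pow_atTop (Nat.pos_iff_ne_zero.mp hε)).comp
        tendsto_natCast_atTop_atTop).const_mul_atTop hc)
    exact tendsto_atTop_mono' atTop
      (eventually_atTop.mpr ⟨1, fun N hN => hcA N hN⟩) h1
  have hfloor : Tendsto (fun N => ⌊A N⌋₊ + 1) atTop atTop :=
    tendsto_atTop_mono (fun N => Nat.le_succ _) (tendsto_nat_floor_atTop.comp hAtop)
  have hps : ∀ (g : ℕ → ℝ), Summable g →
      Tendsto (fun N => ∑ j ∈ Finset.range (⌊A N⌋₊+1), g j) atTop (𝓝 (∑' j, g j)) :=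
    fun g hg => hg.hasSum.tendsto_sum_nat.comp hfloor
  have hS : Tendsto (fun N => ∑ j ∈ Finset.range (⌊A N⌋₊+1), p j) atTop (𝓝 1) := by
    simpa [hp_sum] using hps p hsum0
  have hT1 : Tendsto (fun N => ∑ j ∈ Finset.range (⌊A N⌋₊+1), (j:ℝ)*p j) atTop (𝓝 a) := by
    simpa [← ha] using hps _ hsum1
  have hT2 : Tendsto (fun N => ∑ j ∈ Finset.range (⌊A N⌋₊+1), (j:ℝ)^2*p j) atTop (𝓝 m2) :=
    hps _ hsum2
  have hv : Tendsto (fun N =>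
      (∑ j ∈ Finset.range (⌊A N⌋₊+1), (j:ℝ)^2*p j) / (∑ j ∈ Finset.range (⌊A N⌋₊+1), p j)
      - ((∑ j ∈ Finset.range (⌊A N⌋₊+1), (j:ℝ)*p j) / (∑ j ∈ Finset.range (⌊A N⌋₊+1), p j))^2)
      atTop (𝓝 (σ^2)) := by
    have := (hT2.div hS one_ne_zero).sub ((hT1.div hS one_ne_zero).pow 2)
    simpa [hvar2] using this
  have hev1 : ∀ᶠ N in atTop, 1/2 < ∑ j ∈ Finset.range (⌊A N⌋₊+1), p j :=
    hS.eventually (eventually_gt_nhds (by norm_num))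
  have hev2 : ∀ᶠ N in atTop, 3*σ^2/4 <
      (∑ j ∈ Finset.range (⌊A N⌋₊+1), (j:ℝ)^2*p j) / (∑ j ∈ Finset.range (⌊A N⌋₊+1), p j)
      - ((∑ j ∈ Finset.range (⌊A N⌋₊+1), (j:ℝ)*p j) / (∑ j ∈ Finset.range (⌊A N⌋₊+1), p j))^2 :=
    hv.eventually (eventually_gt_nhds (by nlinarith))
  obtain ⟨N₀, hN₀⟩ := eventually_atTop.mp (hev1.and hev2)
  refine ⟨σ^2/(64*(m3+1)), by positivity, N₀, fun t ht N hN => ?_⟩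
  obtain ⟨hShalf, hvN⟩ := hN₀ N hN.le
  have hA0 : (0:ℝ) ≤ A N := (hApos N).le
  set K := Finset.range (⌊A N⌋₊+1) with hKdef
  set S := ∑ j ∈ K, p j with hSdef
  have hSpos : 0 < S := lt_trans (by norm_num) hShalf
  set T1 := ∑ j ∈ K, (j:ℝ)*p j with hT1def
  set T2 := ∑ j ∈ K, (j:ℝ)^2*p j with hT2def
  set T3 := ∑ j ∈ K, (j:ℝ)^3*p j with hT3def
  have hT3nn : 0 ≤ T3 :=
    Finset.sum_nonneg fun j _ => mul_nonneg (by positivity) (hp_nonneg j)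
  have hT3le : T3 ≤ m3 := by
    rw [hm3, hT3def]
    exact Summable.sum_le_tsum K (fun j _ => mul_nonneg (by positivity) (hp_nonneg j)) hsum3
  -- the truncated distribution sums to 1
  have hq_nonneg : ∀ j, 0 ≤ pTrunc p (A N) j := by
    intro j
    unfold pTrunc
    split
    · exact div_nonneg (hp_nonneg j) (tsum_nonneg fun l => by by_cases h : (l:ℝ) ≤ A N <;> simp [h, hp_nonneg l])
    · exact le_refl 0
  have hE0 : ∑ j ∈ K, pTrunc p (A N) j = 1 := by
    have h := sum_pow_pTrunc p (A N) hA0 0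
    simp only [pow_zero, one_mul] at h
    rw [← hKdef, ← hSdef] at h
    rw [h]
    exact div_self hSpos.ne'
  have hE1 : ∑ j ∈ K, (j:ℝ) * pTrunc p (A N) j = T1 / S := by
    have h := sum_pow_pTrunc p (A N) hA0 1
    simp only [pow_one] at h
    rw [← hKdef, ← hSdef, ← hT1def] at h
    exact h
  have hE2 : ∑ j ∈ K, (j:ℝ)^2 * pTrunc p (A N) j = T2 / S := by
    have h := sum_pow_pTrunc p (A N) hA0 2
    rw [← hKdef, ← hSdef, ← hT2def] at h
    exact h
  have hE3 : ∑ j ∈ K, (j:ℝ)^3 * pTrunc p (A N) j = T3 / S := by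
    have h := sum_pow_pTrunc p (A N) hA0 3
    rw [← hKdef, ← hSdef, ← hT3def] at h
    exact h
  clear_value K S T1 T2 T3
  have hsq : ‖charTrunc p (A N) t‖^2
      ≤ 1 - t^2*(T2/S - (T1/S)^2) + 8*|t|^3*(T3/S) := by
    have hD := doublesum_bound K (pTrunc p (A N)) hq_nonneg hE0 t
    rw [hE1, hE2, hE3] at hD
    calc ‖charTrunc p (A N) t‖^2
        = ∑ j ∈ K, ∑ k ∈ K,
            (pTrunc p (A N) j * pTrunc p (A N) k) * Real.cos (t*((j:ℝ)-(k:ℝ))) := by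
          rw [hKdef]; exact charsq p (A N) t hA0
      _ ≤ _ := hD
  have hT3S : T3 / S ≤ 2*m3 := by
    rw [div_le_iff₀ hSpos]
    nlinarith [hT3le, hShalf, hm3nn, hT3nn]
  have h2 : ‖charTrunc p (A N) t‖^2 ≤ 1 - t^2*(3*σ^2/4) + 16*|t|^3*m3 := by
    have e1 : t^2*(3*σ^2/4) ≤ t^2*(T2/S - (T1/S)^2) :=
      mul_le_mul_of_nonneg_left hvN.le (sq_nonneg t)
    have e2 : 8*|t|^3*(T3/S) ≤ 8*|t|^3*(2*m3) :=
      mul_le_mul_of_nonneg_left hT3S (by positivity)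
    linarith [hsq, e1, e2]
  have ht3 : 16*|t|^3*m3 ≤ σ^2*t^2/4 := by
    have habs3 : |t|^3 = t^2*|t| := by rw [pow_succ, sq_abs]
    have s1 : 16*m3*(t^2*|t|) ≤ 16*(m3+1)*(t^2*|t|) := by
        nlinarith [mul_nonneg (sq_nonneg t) (abs_nonneg t), hm3nn]
    have s2 : 16*(m3+1)*(t^2*|t|) ≤ 16*(m3+1)*(t^2*(σ^2/(64*(m3+1)))) := by
      have hmul : t^2*|t| ≤ t^2*(σ^2/(64*(m3+1))) :=
        mul_le_mul_of_nonneg_left ht.le (sq_nonneg t)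
      have h16 : (0:ℝ) ≤ 16*(m3+1) := by positivity
      exact mul_le_mul_of_nonneg_left hmul h16
    have s3 : 16*(m3+1)*(t^2*(σ^2/(64*(m3+1)))) = σ^2*t^2/4 := by
      field_simp
      ring
    nlinarith [s1, s2, s3, habs3]
  have hfin2 : ‖charTrunc p (A N) t‖^2 ≤ Real.exp (-(σ^2)*t^2/2) := by
    have hexp := Real.add_one_le_exp (-(σ^2)*t^2/2)
    linarith [h2, ht3, hexp]
  have hexp2 : Real.exp (-(σ^2)*t^2/4)^2 = Real.exp (-(σ^2)*t^2/2) := by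
    rw [sq, ← Real.exp_add]
    congr 1
    ring
  have goalexp : Real.exp (-(σ^2)*t^2/4) = Real.exp (-σ^2*t^2/4) := by norm_num
  nlinarith [norm_nonneg (charTrunc p (A N) t), Real.exp_pos (-(σ^2)*t^2/4),
    hfin2, hexp2]
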